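/- Let Ω ⊂ ℝ^d be equipped with a Borel probability measure μ, let 1 < p < ∞, and let p' be defined by 1/p + 1/p' = 1. Let X_N ⊂ L_p(Ω,μ) ∩ C(Ω) be an N-dimensional real subspace. Suppose there exist a finite set W ⊂ Ω, positive numbers (μ_ω)_{ω∈W}, and a constant C₁ > 0 such that ‖f‖_{L_p(Ω,μ)} ≤ C₁·(Σ_{ω∈W} μ_ω |f(ω)|^p)^{1/p} for every f ∈ X_N. Then there exist real numbers (λ_ω)_{ω∈W} such that ∫_Ω f dμ = Σ_{ω∈W} λ_ω f(ω) for every f ∈ X_N and (Σ_{ω∈W} |λ_ω/μ_ω|^{p'} μ_ω)^{1/p'} ≤ C₁. -/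

import Mathlib

open MeasureTheory
open scoped ENNReal NNReal


lemma real_sign_mul_self (x : ℝ) : Real.sign x * x = |x| := by
  rcases lt_trichotomy x 0 with h | h | h
  · rw [Real.sign_of_neg h, abs_of_neg h]; ring
  · simp [h]
  · rw [Real.sign_of_pos h, abs_of_pos h]; ring

lemma lp_dual_bound {ι : Type*} [Fintype ι] {p q : ℝ} (hpq : p.HolderConjugate q)
    {c : ι → ℝ} {C : ℝ} (hC : 0 ≤ C)
    (h : ∀ y : ι → ℝ, (∑ i, y i * c i) ≤ C * (∑ i, |y i| ^ p) ^ (1/p)) :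
    (∑ i, |c i| ^ q) ^ (1/q) ≤ C := by
  have hq0 : q ≠ 0 := hpq.symm.ne_zero
  set S := ∑ i, |c i| ^ q with hS
  have hSnn : 0 ≤ S := Finset.sum_nonneg fun i _ => Real.rpow_nonneg (abs_nonneg _) _
  rcases eq_or_lt_of_le hSnn with h0 | hpos
  · rw [← h0, Real.zero_rpow (by simp [hq0])]; exact hC
  · have key := h (fun i => |c i| ^ (q - 1) * Real.sign (c i))
    have h1 : ∀ i : ι, (|c i| ^ (q - 1) * Real.sign (c i)) * c i = |c i| ^ q := by
      intro i
      rw [mul_assoc, real_sign_mul_self]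
      rcases eq_or_ne (c i) 0 with hc | hc
      · simp [hc, Real.zero_rpow hq0, Real.zero_rpow (show q - 1 ≠ 0 by
          have := hpq.symm.lt; intro h'; rw [sub_eq_zero] at h'; linarith)]
      · nth_rewrite 2 [← Real.rpow_one |c i|]
        rw [← Real.rpow_add (abs_pos.2 hc), sub_add_cancel]
    have h2 : ∀ i : ι, |(|c i| ^ (q - 1) * Real.sign (c i))| ^ p = |c i| ^ q := by
      intro i
      rcases eq_or_ne (c i) 0 with hc | hc
      · simp [hc, Real.zero_rpow hq0, Real.zero_rpow hpq.ne_zero, Real.sign_zero]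
      · have habs : |Real.sign (c i)| = 1 := by
          rcases lt_trichotomy (c i) 0 with h' | h' | h'
          · simp [Real.sign_of_neg h']
          · exact absurd h' hc
          · simp [Real.sign_of_pos h']
        rw [abs_mul, habs, mul_one, abs_of_nonneg (Real.rpow_nonneg (abs_nonneg _) _),
          ← Real.rpow_mul (abs_nonneg _), hpq.symm.sub_one_mul_conj]
    simp only [h1, h2] at key
    have hp1 : (0:ℝ) < S ^ (1/p) := Real.rpow_pos_of_pos hpos _
    have hq : 1/q = 1 - 1/p := by
      have := hpq.inv_add_inv_eq_one
      rw [← one_div, ← one_div] at this; linarith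
    rw [hq, Real.rpow_sub hpos, Real.rpow_one, div_le_iff₀ hp1]
    exact key

section Integrals
variable {α : Type*} [MeasurableSpace α]

lemma integrable_of_abs_rpow {μ : Measure α} [IsProbabilityMeasure μ] {p : ℝ} (hp : 1 < p)
    {f : α → ℝ} (hmeas : AEStronglyMeasurable f μ)
    (hint : Integrable (fun x => |f x| ^ p) μ) : Integrable f μ := by
  refine Integrable.mono (g := fun x => (1:ℝ) + |f x| ^ p)
    ((integrable_const 1).add hint) hmeas ?_
  filter_upwards with x
  have h1 : (0:ℝ) ≤ |f x| ^ p := Real.rpow_nonneg (abs_nonneg _) _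
  rw [Real.norm_eq_abs, Real.norm_eq_abs, abs_of_nonneg (by linarith : (0:ℝ) ≤ 1 + |f x| ^ p)]
  rcases le_or_gt (|f x|) 1 with h | h
  · linarith
  · have h2 := Real.rpow_le_rpow_of_exponent_le h.le hp.le
    rw [Real.rpow_one] at h2
    linarith

lemma memLp_of_abs_rpow {μ : Measure α} [IsProbabilityMeasure μ] {p : ℝ} (hp : 1 < p)
    {f : α → ℝ} (hmeas : AEStronglyMeasurable f μ)
    (hint : Integrable (fun x => |f x| ^ p) μ) : MemLp f (ENNReal.ofReal p) μ := by
  have hp0 : ENNReal.ofReal p ≠ 0 := by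
    simp [ENNReal.ofReal_eq_zero, not_le]; linarith
  have hptop : ENNReal.ofReal p ≠ ⊤ := ENNReal.ofReal_ne_top
  have := (memLp_norm_rpow_iff (p := ENNReal.ofReal p) (q := ENNReal.ofReal p) hmeas hp0 hptop).1
  apply this
  have hPP : ENNReal.ofReal p / ENNReal.ofReal p = 1 := ENNReal.div_self hp0 hptop
  rw [hPP, memLp_one_iff_integrable]
  have htr : (ENNReal.ofReal p).toReal = p := ENNReal.toReal_ofReal (by linarith)
  simpa [htr, Real.norm_eq_abs] using hint

lemma abs_integral_le_rpow {μ : Measure α} [IsProbabilityMeasure μ] {p q : ℝ}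
    (hpq : p.HolderConjugate q) {f : α → ℝ} (hmeas : AEStronglyMeasurable f μ)
    (hint : Integrable (fun x => |f x| ^ p) μ) :
    |∫ x, f x ∂μ| ≤ (∫ x, |f x| ^ p ∂μ) ^ (1/p) := by
  have hif : Integrable f μ := integrable_of_abs_rpow hpq.lt hmeas hint
  have h1 : |∫ x, f x ∂μ| ≤ ∫ x, |f x| ∂μ := by
    simpa [Real.norm_eq_abs] using norm_integral_le_integral_norm (μ := μ) f
  refine h1.trans ?_
  have hmem : MemLp (fun x => |f x|) (ENNReal.ofReal p) μ := by
    have := (memLp_of_abs_rpow hpq.lt hmeas hint).norm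
    simpa [Real.norm_eq_abs] using this
  have hone : MemLp (fun _ : α => (1:ℝ)) (ENNReal.ofReal q) μ := memLp_const 1
  have := integral_mul_le_Lp_mul_Lq_of_nonneg hpq (μ := μ)
    (Filter.Eventually.of_forall fun x => abs_nonneg (f x))
    (Filter.Eventually.of_forall fun _ => zero_le_one) hmem hone
  simp only [mul_one, Real.one_rpow, integral_const, measure_univ, ENNReal.toReal_one,
    smul_eq_mul, one_mul, Real.one_rpow, probReal_univ] at this
  exact this

end Integrals


/-- **Stable exact weighted discretization from a one-sided Marcinkiewicz estimate.**
Let `Ω ⊂ ℝ^d` carry a Borel probability measure `μ`, `1 < p < ∞`, `1/p + 1/p' = 1`, and let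
`X ⊂ L_p(Ω,μ) ∩ C(Ω)` be an `N`-dimensional real subspace. If a finite set `W ⊂ Ω` with
positive numbers `(μ_ω)` satisfies `‖f‖_p ≤ C₁ (∑_{ω∈W} μ_ω |f(ω)|^p)^{1/p}` for all `f ∈ X`,
then there exist real numbers `(λ_ω)_{ω∈W}` with `∫_Ω f dμ = ∑_{ω∈W} λ_ω f(ω)` for all
`f ∈ X` and `(∑_{ω∈W} |λ_ω/μ_ω|^{p'} μ_ω)^{1/p'} ≤ C₁`. -/
theorem stable_exact_weighted_cubature
    (d N : ℕ) (Ω : Set (Fin d → ℝ)) (μ : Measure Ω) [IsProbabilityMeasure μ]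
    (p p' : ℝ) (hp : 1 < p) (hpp' : 1 / p + 1 / p' = 1)
    (X : Submodule ℝ (Ω → ℝ)) (hdim : Module.finrank ℝ X = N)
    (hcont : ∀ f ∈ X, Continuous f)
    (hLp : ∀ f ∈ X, Integrable (fun x => |f x| ^ p) μ)
    (W : Finset Ω) (μw : Ω → ℝ) (hμw : ∀ ω ∈ W, 0 < μw ω)
    (C₁ : ℝ) (hC₁ : 0 < C₁)
    (honesided : ∀ f ∈ X,
      (∫ x, |f x| ^ p ∂μ) ^ (1 / p) ≤ C₁ * (∑ ω ∈ W, μw ω * |f ω| ^ p) ^ (1 / p)) :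
    ∃ lam : Ω → ℝ,
      (∀ f ∈ X, ∫ x, f x ∂μ = ∑ ω ∈ W, lam ω * f ω) ∧
      (∑ ω ∈ W, |lam ω / μw ω| ^ p' * μw ω) ^ (1 / p') ≤ C₁ := by
  classical
  have hpq : p.HolderConjugate p' := Real.holderConjugate_iff.2 ⟨hp, by rw [← one_div, ← one_div]; exact hpp'⟩
  have hp0 : (0:ℝ) < p := hpq.pos
  have hq0 : (0:ℝ) < p' := hpq.symm.pos
  set P : ℝ≥0∞ := ENNReal.ofReal p with hP
  haveI : Fact (1 ≤ P) := ⟨by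
    rw [hP, ← ENNReal.ofReal_one]; exact ENNReal.ofReal_le_ofReal hp.le⟩
  have hPt : P.toReal = p := ENNReal.toReal_ofReal hp0.le
  have hmeas : ∀ f ∈ X, AEStronglyMeasurable (f : Ω → ℝ) μ :=
    fun f hf => (hcont f hf).aestronglyMeasurable
  have hint : ∀ f ∈ X, Integrable (f : Ω → ℝ) μ :=
    fun f hf => integrable_of_abs_rpow hp (hmeas f hf) (hLp f hf)
  -- the weighted evaluation map T : X → ℓ_p^W
  let E := PiLp P (fun _ : ↥W => ℝ)
  haveI : FiniteDimensional ℝ E := Module.Finite.of_basis (PiLp.basisFun P ℝ ↥W)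
  let T : X →ₗ[ℝ] E :=
    { toFun := fun f => WithLp.toLp P (fun i : ↥W => μw i.1 ^ (1/p) * (f : Ω → ℝ) i.1)
      map_add' := by
        intro f g; ext i
        show μw i.1 ^ (1/p) * ((f : Ω → ℝ) i.1 + (g : Ω → ℝ) i.1) = _
        show _ = μw i.1 ^ (1/p) * (f : Ω → ℝ) i.1 + μw i.1 ^ (1/p) * (g : Ω → ℝ) i.1
        ring
      map_smul' := by
        intro a f; ext i
        show μw i.1 ^ (1/p) * (a * (f : Ω → ℝ) i.1) = a * (μw i.1 ^ (1/p) * (f : Ω → ℝ) i.1)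
        ring }
  have hTapp : ∀ (f : X) (i : ↥W), T f i = μw i.1 ^ (1/p) * (f : Ω → ℝ) i.1 := fun _ _ => rfl
  have hTnorm : ∀ f : X, ‖T f‖ = (∑ ω ∈ W, μw ω * |(f : Ω → ℝ) ω| ^ p) ^ (1/p) := by
    intro f
    rw [PiLp.norm_eq_sum (by rw [hPt]; exact hp0), hPt]
    congr 1
    rw [← Finset.sum_coe_sort W (fun ω => μw ω * |(f : Ω → ℝ) ω| ^ p)]
    refine Finset.sum_congr rfl fun i _ => ?_
    have hμ : 0 < μw i.1 := hμw i.1 i.2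
    rw [hTapp, Real.norm_eq_abs, abs_mul, abs_of_nonneg (Real.rpow_nonneg hμ.le _),
      Real.mul_rpow (Real.rpow_nonneg hμ.le _) (abs_nonneg _),
      ← Real.rpow_mul hμ.le, one_div_mul_cancel hp0.ne', Real.rpow_one]
  -- the integration functional L
  let L : X →ₗ[ℝ] ℝ :=
    { toFun := fun f => ∫ x, (f : Ω → ℝ) x ∂μ
      map_add' := by
        intro f g
        show ∫ x, ((f : Ω → ℝ) x + (g : Ω → ℝ) x) ∂μ = _
        rw [integral_add (hint f f.2) (hint g g.2)]
      map_smul' := by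
        intro a f
        show ∫ x, a * (f : Ω → ℝ) x ∂μ = a * ∫ x, (f : Ω → ℝ) x ∂μ
        rw [integral_const_mul] }
  have hkerle : LinearMap.ker T ≤ LinearMap.ker L := by
    intro f hf
    rw [LinearMap.mem_ker] at hf ⊢
    have hzero : ∀ ω ∈ W, (f : Ω → ℝ) ω = 0 := by
      intro ω hω
      have := congrFun (show (T f : ↥W → ℝ) = 0 from congrArg WithLp.ofLp hf) ⟨ω, hω⟩
      have hμ : (0:ℝ) < μw ω ^ (1/p) := Real.rpow_pos_of_pos (hμw ω hω) _
      have : μw ω ^ (1/p) * (f : Ω → ℝ) ω = 0 := this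
      exact (mul_eq_zero.1 this).resolve_left hμ.ne'
    have hsum : ∑ ω ∈ W, μw ω * |(f : Ω → ℝ) ω| ^ p = 0 := by
      refine Finset.sum_eq_zero fun ω hω => ?_
      rw [hzero ω hω, abs_zero, Real.zero_rpow hp0.ne', mul_zero]
    have h1 := honesided f f.2
    rw [hsum, Real.zero_rpow (by positivity : 1/p ≠ 0), mul_zero] at h1
    have h2 : (0:ℝ) ≤ ∫ x, |(f : Ω → ℝ) x| ^ p ∂μ :=
      integral_nonneg fun x => Real.rpow_nonneg (abs_nonneg _) _
    have h3 : (∫ x, |(f : Ω → ℝ) x| ^ p ∂μ) ^ (1/p) = 0 :=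
      le_antisymm h1 (Real.rpow_nonneg h2 _)
    have h4 : ∫ x, |(f : Ω → ℝ) x| ^ p ∂μ = 0 :=
      (Real.rpow_eq_zero h2 (by positivity)).1 h3
    have h5 : (fun x => |(f : Ω → ℝ) x| ^ p) =ᵐ[μ] 0 :=
      (integral_eq_zero_iff_of_nonneg (fun x => Real.rpow_nonneg (abs_nonneg _) _)
        (hLp f f.2)).1 h4
    have h6 : (f : Ω → ℝ) =ᵐ[μ] 0 := by
      filter_upwards [h5] with x hx
      have : |(f : Ω → ℝ) x| = 0 := by
        by_contra hne
        exact hne (abs_eq_zero.2 (by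
          have := (Real.rpow_eq_zero (abs_nonneg _) hp0.ne').1 hx
          exact abs_eq_zero.1 this)) |>.elim
      simpa using abs_eq_zero.1 this
    show ∫ x, (f : Ω → ℝ) x ∂μ = 0
    rw [integral_congr_ae h6]; simp
  -- factor L through the range of T and extend by Hahn-Banach
  let S := LinearMap.range T
  let e := T.quotKerEquivRange
  let ℓ₀ : S →ₗ[ℝ] ℝ := ((LinearMap.ker T).liftQ L hkerle) ∘ₗ e.symm.toLinearMap
  have hℓ₀ : ∀ f : X, ℓ₀ ⟨T f, LinearMap.mem_range_self T f⟩ = L f := by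
    intro f
    have h1 : e (Submodule.Quotient.mk f) = ⟨T f, LinearMap.mem_range_self T f⟩ :=
      Subtype.ext (T.quotKerEquivRange_apply_mk f)
    have h2 : e.symm ⟨T f, LinearMap.mem_range_self T f⟩ = Submodule.Quotient.mk f := by
      rw [LinearEquiv.symm_apply_eq]; exact h1.symm
    show ((LinearMap.ker T).liftQ L hkerle) (e.symm ⟨T f, LinearMap.mem_range_self T f⟩) = L f
    rw [h2, Submodule.liftQ_apply]
  let ℓ : S →L[ℝ] ℝ := LinearMap.toContinuousLinearMap ℓ₀
  have hℓnorm : ‖ℓ‖ ≤ C₁ := by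
    refine ContinuousLinearMap.opNorm_le_bound _ hC₁.le ?_
    rintro ⟨y, f, rfl⟩
    have hval : ℓ ⟨T f, LinearMap.mem_range_self T f⟩ = L f := by
      show ℓ₀ ⟨T f, LinearMap.mem_range_self T f⟩ = L f
      exact hℓ₀ f
    have hnorm : ‖(⟨T f, LinearMap.mem_range_self T f⟩ : S)‖ = ‖T f‖ := rfl
    rw [hval, hnorm, Real.norm_eq_abs]
    calc |L f| ≤ (∫ x, |(f : Ω → ℝ) x| ^ p ∂μ) ^ (1/p) :=
          abs_integral_le_rpow hpq (hmeas f f.2) (hLp f f.2)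
      _ ≤ C₁ * (∑ ω ∈ W, μw ω * |(f : Ω → ℝ) ω| ^ p) ^ (1/p) := honesided f f.2
      _ = C₁ * ‖T f‖ := by rw [hTnorm]
  obtain ⟨g, hg_ext, hg_norm⟩ := exists_extension_norm_eq S ℓ
  have hgnorm : ‖g‖ ≤ C₁ := by rw [hg_norm]; exact hℓnorm
  let b := PiLp.basisFun P ℝ ↥W
  let c : ↥W → ℝ := fun i => g (b i)
  have hgy : ∀ y : E, g y = ∑ i, y i * c i := by
    intro y
    conv_lhs => rw [← b.sum_repr y]
    rw [map_sum]
    refine Finset.sum_congr rfl fun i _ => ?_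
    rw [_root_.map_smul, smul_eq_mul, PiLp.basisFun_repr]
  have hdual : (∑ i, |c i| ^ p') ^ (1/p') ≤ C₁ := by
    refine lp_dual_bound hpq hC₁.le ?_
    intro y
    let Y : E := (WithLp.equiv P (↥W → ℝ)).symm y
    have h1 : ∑ i, y i * c i = g Y := (hgy Y).symm
    rw [h1]
    have h3 : g Y ≤ ‖g‖ * ‖Y‖ := (le_abs_self _).trans (by
      rw [← Real.norm_eq_abs]; exact g.le_opNorm Y)
    have h4 : ‖Y‖ = (∑ i, |y i| ^ p) ^ (1/p) := by
      rw [PiLp.norm_eq_sum (by rw [hPt]; exact hp0), hPt]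
      congr 1
    rw [h4] at h3
    exact h3.trans (mul_le_mul_of_nonneg_right hgnorm (Real.rpow_nonneg
      (Finset.sum_nonneg fun i _ => Real.rpow_nonneg (abs_nonneg _) _) _))
  refine ⟨fun ω => if h : ω ∈ W then μw ω ^ (1/p) * c ⟨ω, h⟩ else 0, ?_, ?_⟩
  · intro f hf
    have h1 : ∫ x, f x ∂μ = L ⟨f, hf⟩ := rfl
    have h2 : L ⟨f, hf⟩ = g (T ⟨f, hf⟩) :=
      (hℓ₀ ⟨f, hf⟩).symm.trans
        (hg_ext ⟨T ⟨f, hf⟩, LinearMap.mem_range_self T ⟨f, hf⟩⟩).symm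
    rw [h1, h2, hgy]
    rw [← Finset.sum_coe_sort W
      (fun ω => (if h : ω ∈ W then μw ω ^ (1/p) * c ⟨ω, h⟩ else 0) * f ω)]
    refine Finset.sum_congr rfl fun i _ => ?_
    rw [hTapp, dif_pos i.2]
    ring
  · have heq : ∑ ω ∈ W, |(if h : ω ∈ W then μw ω ^ (1/p) * c ⟨ω, h⟩ else 0) / μw ω| ^ p' * μw ω
        = ∑ i : ↥W, |c i| ^ p' := by
      rw [← Finset.sum_coe_sort W
        (fun ω => |(if h : ω ∈ W then μw ω ^ (1/p) * c ⟨ω, h⟩ else 0) / μw ω| ^ p' * μw ω)]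
      refine Finset.sum_congr rfl fun i _ => ?_
      have hμ : 0 < μw i.1 := hμw i.1 i.2
      rw [dif_pos i.2]
      have hdiv : μw i.1 ^ (1/p) * c ⟨i.1, i.2⟩ / μw i.1 = μw i.1 ^ (1/p - 1) * c i := by
        rw [Real.rpow_sub hμ, Real.rpow_one]
        field_simp
      rw [hdiv, abs_mul, abs_of_nonneg (Real.rpow_nonneg hμ.le _),
        Real.mul_rpow (Real.rpow_nonneg hμ.le _) (abs_nonneg _),
        ← Real.rpow_mul hμ.le]
      have hexp : (1/p - 1) * p' = -1 := by
        have e1 : 1/p - 1 = -(1/p') := by linarith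
        rw [e1, neg_mul, one_div, inv_mul_cancel₀ hq0.ne']
      rw [hexp, Real.rpow_neg_one]
      field_simp
    rw [heq]
    exact hdual
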